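/- Let h ∈ C_c⁺(ℂ) satisfy Sh = h (invariance under vertical Steiner symmetrization) and S_{α_j} h = h for a sequence of nonzero angles α_j → 0 in ℝ/(2πℤ). Then h = h*, its symmetric decreasing rearrangement. -/

import Mathlib

open MeasureTheory

noncomputable def sdr (f : ℝ → ℝ) (x : ℝ) : ℝ :=
  ∫ t in Set.Ioi (0:ℝ),
    if 2 * |x| < (volume {y : ℝ | t < f y}).toReal then (1:ℝ) else 0

noncomputable def steiner (g : ℂ → ℝ) (z : ℂ) : ℝ :=
  sdr (fun y : ℝ => g (z.re + y * Complex.I)) z.im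

noncomputable def rot (α : ℝ) (g : ℂ → ℝ) : ℂ → ℝ :=
  fun z => g (Complex.exp (-(α : ℂ) * Complex.I) * z)

noncomputable def steinerDir (α : ℝ) (g : ℂ → ℝ) : ℂ → ℝ :=
  rot α (steiner (rot (-α) g))

noncomputable def sdr2 (f : ℂ → ℝ) (z : ℂ) : ℝ :=
  ∫ t in Set.Ioi (0:ℝ),
    if Real.pi * ‖z‖ ^ 2 < (volume {w : ℂ | t < f w}).toReal
    then (1:ℝ) else 0

section Aux
open MeasureTheory Set Complex Filter
open scoped ENNReal NNReal

lemma integral_ite (P : ℝ → Prop) [DecidablePred P]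
    (hS : MeasurableSet (Set.Ioi (0:ℝ) ∩ {t | P t})) :
    ∫ t in Set.Ioi (0:ℝ), (if P t then (1:ℝ) else 0)
      = (volume (Set.Ioi (0:ℝ) ∩ {t | P t})).toReal := by
  have h1 : Set.EqOn (fun t => if P t then (1:ℝ) else 0)
      ((Set.Ioi (0:ℝ) ∩ {t | P t}).indicator (fun _ => (1:ℝ))) (Set.Ioi 0) := by
    intro t ht
    by_cases hp : P t <;> simp [Set.indicator, hp, ht]
  rw [setIntegral_congr_fun measurableSet_Ioi h1, setIntegral_indicator hS,
    ← Set.inter_assoc, Set.inter_self, setIntegral_const]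
  simp
  rfl

lemma measurable_zone {P : ℝ → Prop}
    (hmono : ∀ t₁ t₂, 0 < t₁ → t₁ ≤ t₂ → P t₂ → P t₁)
    (M : ℝ) (hbd : ∀ t, 0 < t → P t → t ≤ M) :
    MeasurableSet (Set.Ioi (0:ℝ) ∩ {t | P t}) := by
  set S := Set.Ioi (0:ℝ) ∩ {t | P t} with hSdef
  rcases Set.eq_empty_or_nonempty S with he | hne
  · rw [he]; exact MeasurableSet.empty
  have hbdd : BddAbove S := ⟨M, fun t ht => hbd t ht.1 ht.2⟩
  set s := sSup S with hs
  have hsub1 : Set.Ioo 0 s ⊆ S := by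
    rintro t ⟨ht0, hts⟩
    obtain ⟨t₂, ht₂, htt₂⟩ := exists_lt_of_lt_csSup hne hts
    exact ⟨ht0, hmono t t₂ ht0 htt₂.le ht₂.2⟩
  have hsub2 : S \ Set.Ioo 0 s ⊆ {s} := by
    rintro t ⟨htS, htn⟩
    have h1 : t ≤ s := le_csSup hbdd htS
    have h2 : ¬ t < s := fun hlt => htn ⟨htS.1, hlt⟩
    simp [le_antisymm h1 (not_lt.1 h2)]
  rw [← Set.union_diff_cancel hsub1]
  exact measurableSet_Ioo.union
    (((Set.countable_singleton s).mono hsub2).measurableSet)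

lemma integral_ite_lt (c : ℝ) (hc : 0 ≤ c) :
    ∫ t in Set.Ioi (0:ℝ), (if t < c then (1:ℝ) else 0) = c := by
  rw [integral_ite (P := fun t => t < c)
    (by exact measurableSet_Ioi.inter measurableSet_Iio)]
  have he : Set.Ioi (0:ℝ) ∩ {t | t < c} = Set.Ioo 0 c := rfl
  rw [he, Real.volume_Ioo, ENNReal.toReal_ofReal (by linarith)]
  ring

lemma ball_toReal (s : ℝ) (hs : 0 ≤ s) :
    ((ENNReal.ofReal s) ^ 2 * (NNReal.pi : ℝ≥0∞)).toReal = Real.pi * s ^ 2 := by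
  rw [ENNReal.toReal_mul, ENNReal.toReal_pow, ENNReal.toReal_ofReal hs, ENNReal.coe_toReal]
  show _ * Real.pi = _
  ring

lemma final (h : ℂ → ℝ) (hc : Continuous h) (hs : HasCompactSupport h)
    (h0 : ∀ z, 0 ≤ h z) (hS : steiner h = h)
    (hrot : ∀ (θ : ℝ) (w : ℂ), h (Complex.exp ((θ:ℂ) * Complex.I) * w) = h w) :
    h = sdr2 h := by
  classical
  -- bounds
  obtain ⟨C, hC⟩ := hs.isCompact.exists_bound_of_continuousOn hc.continuousOn
  set M : ℝ := max C 1 with hMdef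
  have hM0 : (0:ℝ) < M := lt_of_lt_of_le one_pos (le_max_right _ _)
  have hM : ∀ z, h z ≤ M := by
    intro z
    by_cases hz : z ∈ tsupport h
    · exact le_trans (le_trans (le_abs_self _) (hC z hz)) (le_max_left _ _)
    · rw [image_eq_zero_of_notMem_tsupport hz]; exact hM0.le
  obtain ⟨R, hR0, hR⟩ : ∃ R, 0 ≤ R ∧ tsupport h ⊆ Metric.closedBall 0 R := by
    obtain ⟨R, hR⟩ := hs.isCompact.isBounded.subset_closedBall 0
    exact ⟨max R 0, le_max_right _ _,
      hR.trans (Metric.closedBall_subset_closedBall (le_max_left _ _))⟩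
  have hRz : ∀ z : ℂ, R < ‖z‖ → h z = 0 := by
    intro z hz
    apply image_eq_zero_of_notMem_tsupport
    intro hmem
    have := hR hmem
    rw [Metric.mem_closedBall, Complex.dist_eq, sub_zero] at this
    linarith
  -- radiality
  have hrad : ∀ z : ℂ, h z = h (Complex.ofReal ‖z‖) := by
    intro z
    have h1 := hrot z.arg (Complex.ofReal ‖z‖)
    rw [← h1]
    congr 1
    rw [mul_comm]
    exact (Complex.norm_mul_exp_arg_mul_I z).symm
  set φ : ℝ → ℝ := fun r => h (Complex.ofReal r) with hφdef
  have hslice : ∀ y : ℝ, h (Complex.ofReal y * Complex.I) = φ |y| := by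
    intro y
    rw [hrad (Complex.ofReal y * Complex.I)]
    congr 2
    rw [norm_mul, Complex.norm_I, Complex.norm_real, mul_one, Real.norm_eq_abs]
  set ψ : ℝ → ℝ := fun y => φ |y| with hψdef
  -- steiner formula along the imaginary axis
  have hpt : ∀ y : ℝ, φ |y| = sdr ψ y := by
    intro y
    have hz_re : (Complex.ofReal y * Complex.I).re = 0 := by simp
    have hz_im : (Complex.ofReal y * Complex.I).im = y := by simp
    calc φ |y| = h (Complex.ofReal y * Complex.I) := (hslice y).symm
      _ = steiner h (Complex.ofReal y * Complex.I) := (congrFun hS _).symm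
      _ = sdr (fun y' : ℝ => h (((0:ℝ):ℂ) + y' * Complex.I)) y := by
          unfold steiner; rw [hz_re, hz_im]
      _ = sdr ψ y := by
          congr 1
          funext y'
          show h (((0:ℝ):ℂ) + y' * Complex.I) = φ |y'|
          rw [← hslice y']
          norm_num
  -- properties of the slice distribution
  have hV0fin : ∀ t : ℝ, 0 < t → volume {y' : ℝ | t < ψ y'} ≠ ⊤ := by
    intro t ht
    have hsub : {y' : ℝ | t < ψ y'} ⊆ Set.Icc (-R) R := by
      intro y' hy'
      simp only [mem_setOf_eq, hψdef] at hy'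
      rw [← hslice y'] at hy'
      have : ‖(Complex.ofReal y' * Complex.I)‖ ≤ R := by
        by_contra hgt
        push_neg at hgt
        rw [hRz _ hgt] at hy'
        linarith
      rw [norm_mul, Complex.norm_I, Complex.norm_real, mul_one, Real.norm_eq_abs] at this
      exact abs_le.mp this
    exact (lt_of_le_of_lt (measure_mono hsub)
      (by rw [Real.volume_Icc]; exact ENNReal.ofReal_lt_top)).ne
  have hV0zero : ∀ t : ℝ, M ≤ t → volume {y' : ℝ | t < ψ y'} = 0 := by
    intro t htM
    convert measure_empty (μ := volume)
    rw [Set.eq_empty_iff_forall_notMem]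
    intro y' hy'
    simp only [mem_setOf_eq, hψdef, hφdef] at hy'
    linarith [hM (Complex.ofReal |y'|)]
  -- measurability + representation of sdr ψ
  have hPmono : ∀ (c : ℝ), 0 ≤ c → ∀ t₁ t₂, 0 < t₁ → t₁ ≤ t₂ →
      (c < (volume {y' : ℝ | t₂ < ψ y'}).toReal) → c < (volume {y' : ℝ | t₁ < ψ y'}).toReal := by
    intro c hc t₁ t₂ ht₁ ht₁₂ hlt
    refine lt_of_lt_of_le hlt (ENNReal.toReal_mono (hV0fin t₁ ht₁) (measure_mono ?_))
    intro y' hy'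
    exact lt_of_le_of_lt ht₁₂ hy'

  have hPbd : ∀ (c : ℝ), 0 ≤ c → ∀ t, 0 < t →
      (c < (volume {y' : ℝ | t < ψ y'}).toReal) → t ≤ M := by
    intro c hc t ht hlt
    by_contra hgt
    push_neg at hgt
    rw [hV0zero t hgt.le] at hlt
    simp only [ENNReal.toReal_zero] at hlt
    linarith
  have hsdr_eq : ∀ y : ℝ, sdr ψ y =
      (volume (Set.Ioi (0:ℝ) ∩ {t | 2*|y| < (volume {y' : ℝ | t < ψ y'}).toReal})).toReal := by
    intro y
    unfold sdr
    exact integral_ite _ (measurable_zone (hPmono _ (by positivity)) M (hPbd _ (by positivity)))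
  have hφanti : ∀ r₁ r₂ : ℝ, 0 ≤ r₁ → r₁ ≤ r₂ → φ r₂ ≤ φ r₁ := by
    intro r₁ r₂ h1 h2
    have e1 : φ r₁ = sdr ψ r₁ := by
      have := hpt r₁; rwa [_root_.abs_of_nonneg h1] at this
    have e2 : φ r₂ = sdr ψ r₂ := by
      have := hpt r₂; rwa [_root_.abs_of_nonneg (h1.trans h2)] at this
    rw [e1, e2, hsdr_eq, hsdr_eq]
    apply ENNReal.toReal_mono
    · have hsub : Set.Ioi (0:ℝ) ∩
          {t | 2*|r₁| < (volume {y' : ℝ | t < ψ y'}).toReal} ⊆ Set.Ioc 0 M := by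
        rintro t ⟨ht, hP⟩
        exact ⟨ht, hPbd _ (by positivity) t ht hP⟩
      exact (lt_of_le_of_lt (measure_mono hsub)
        (by rw [Real.volume_Ioc]; exact ENNReal.ofReal_lt_top)).ne
    · apply measure_mono
      rintro t ⟨ht, hP⟩
      simp only [mem_setOf_eq] at hP
      refine ⟨ht, ?_⟩
      show 2*|r₁| < _
      refine lt_of_le_of_lt ?_ hP
      rw [_root_.abs_of_nonneg h1, _root_.abs_of_nonneg (h1.trans h2)]
      linarith
  have hVfin : ∀ t : ℝ, 0 < t → volume {w : ℂ | t < h w} ≠ ⊤ := by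
    intro t ht
    have hsub : {w : ℂ | t < h w} ⊆ Metric.closedBall 0 R := by
      intro w hw
      simp only [mem_setOf_eq] at hw
      rw [Metric.mem_closedBall, Complex.dist_eq, sub_zero]
      by_contra hgt
      push_neg at hgt
      rw [hRz w hgt] at hw
      linarith
    refine ne_top_of_le_ne_top ?_ (measure_mono hsub)
    rw [Complex.volume_closedBall]
    exact ENNReal.mul_ne_top (ENNReal.pow_ne_top ENNReal.ofReal_ne_top) ENNReal.coe_ne_top
  have hclaim : ∀ (z : ℂ) (t : ℝ), 0 < t →
      (Real.pi * ‖z‖^2 < (volume {w : ℂ | t < h w}).toReal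
        ↔ t < φ ‖z‖) := by
    intro z t ht
    set r := ‖z‖ with hrdef
    have hr : 0 ≤ r := norm_nonneg z
    constructor
    · intro hlt
      by_contra hle
      push_neg at hle
      have hsub : {w : ℂ | t < h w} ⊆ Metric.closedBall 0 r := by
        intro w hw
        simp only [mem_setOf_eq] at hw
        rw [Metric.mem_closedBall, Complex.dist_eq, sub_zero]
        by_contra hgt
        push_neg at hgt
        have h1 : φ ‖w‖ ≤ φ r := hφanti r _ hr hgt.le
        have h2 : h w ≤ t := by rw [hrad w]; exact le_trans h1 hle
        linarith
      have h3 : (volume {w : ℂ | t < h w}).toReal ≤ Real.pi * r^2 := by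
        have h4 : volume {w : ℂ | t < h w} ≤ ENNReal.ofReal r ^ 2 * (NNReal.pi : ℝ≥0∞) := by
          rw [← Complex.volume_closedBall 0 r]
          exact measure_mono hsub
        calc (volume {w : ℂ | t < h w}).toReal
            ≤ ((ENNReal.ofReal r ^ 2 * (NNReal.pi : ℝ≥0∞))).toReal :=
              ENNReal.toReal_mono
                (ENNReal.mul_ne_top (ENNReal.pow_ne_top ENNReal.ofReal_ne_top)
                  ENNReal.coe_ne_top) h4
          _ = Real.pi * r^2 := ball_toReal r hr
      linarith
    · intro htφ
      have hcφ : Continuous φ := hc.comp Complex.continuous_ofReal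
      obtain ⟨δ, hδ0, hδ⟩ := Metric.continuous_iff.mp hcφ r (φ r - t) (by linarith)
      set r' := r + δ/2 with hr'def
      have hrr' : r < r' := by rw [hr'def]; linarith
      have htφ' : t < φ r' := by
        have h5 := hδ r' (by
          rw [Real.dist_eq, hr'def, show r + δ/2 - r = δ/2 by ring,
            _root_.abs_of_nonneg (by linarith : (0:ℝ) ≤ δ/2)]
          linarith)
        rw [Real.dist_eq] at h5
        have h6 := abs_lt.mp h5
        linarith [h6.1]
      have hsub : Metric.closedBall (0:ℂ) r' ⊆ {w : ℂ | t < h w} := by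
        intro w hw
        rw [Metric.mem_closedBall, Complex.dist_eq, sub_zero] at hw
        show t < h w
        rw [hrad w]
        exact lt_of_lt_of_le htφ' (hφanti ‖w‖ r' (norm_nonneg w) hw)
      have h6 : ENNReal.ofReal r' ^ 2 * (NNReal.pi : ℝ≥0∞) ≤ volume {w : ℂ | t < h w} := by
        rw [← Complex.volume_closedBall 0 r']
        exact measure_mono hsub
      have h7 : Real.pi * r'^2 ≤ (volume {w : ℂ | t < h w}).toReal := by
        have h8 := ENNReal.toReal_mono (hVfin t ht) h6
        rwa [ball_toReal r' (by linarith)] at h8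
      have h9 : Real.pi * r^2 < Real.pi * r'^2 := by
        have hπ := Real.pi_pos
        have hsq : r^2 < r'^2 := by nlinarith
        exact mul_lt_mul_of_pos_left hsq hπ
      linarith
  funext z
  have e1 : (∫ t in Set.Ioi (0:ℝ),
      if Real.pi * ‖z‖ ^ 2 < (volume {w : ℂ | t < h w}).toReal
      then (1:ℝ) else 0)
      = ∫ t in Set.Ioi (0:ℝ), if t < φ ‖z‖ then (1:ℝ) else 0 := by
    apply setIntegral_congr_fun measurableSet_Ioi
    intro t ht
    exact if_congr (hclaim z t ht) rfl rfl
  show h z = sdr2 h z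
  unfold sdr2
  rw [e1, integral_ite_lt _ (h0 _)]
  exact hrad z


lemma sdr_neg (f : ℝ → ℝ) (x : ℝ) : sdr f (-x) = sdr f x := by
  unfold sdr; simp [abs_neg]

lemma steiner_conj (g : ℂ → ℝ) (z : ℂ) :
    steiner g ((starRingEnd ℂ) z) = steiner g z := by
  unfold steiner
  simp only [Complex.conj_re, Complex.conj_im]
  exact sdr_neg _ _

lemma rot_rot (a b : ℝ) (g : ℂ → ℝ) : rot a (rot b g) = rot (a+b) g := by
  funext z; unfold rot
  rw [← mul_assoc, ← Complex.exp_add]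
  congr 2
  push_cast; ring

lemma rot_zero (g : ℂ → ℝ) : rot 0 g = g := by
  funext z; unfold rot; simp

lemma rot_two (h : ℂ → ℝ) (a : ℝ)
    (hdir : ∀ z : ℂ, h (Complex.exp ((a:ℂ) * Complex.I) * (starRingEnd ℂ) z)
      = h (Complex.exp ((a:ℂ) * Complex.I) * z))
    (hconj : ∀ z : ℂ, h ((starRingEnd ℂ) z) = h z) (w : ℂ) :
    h (Complex.exp ((2*a:ℂ) * Complex.I) * w) = h w := by
  have h1 := hdir (Complex.exp (-(a:ℂ) * Complex.I) * (starRingEnd ℂ) w)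
  have e1 : (starRingEnd ℂ) (Complex.exp (-(a:ℂ) * Complex.I) * (starRingEnd ℂ) w)
      = Complex.exp ((a:ℂ) * Complex.I) * w := by
    rw [map_mul, ← Complex.exp_conj]
    simp [map_mul, Complex.conj_I, Complex.conj_ofReal]
  rw [e1, ← mul_assoc, ← Complex.exp_add, ← mul_assoc, ← Complex.exp_add] at h1
  have e2 : (a:ℂ)*Complex.I + (a:ℂ)*Complex.I = (2*a:ℂ)*Complex.I := by push_cast; ring
  have e3 : (a:ℂ)*Complex.I + -(a:ℂ)*Complex.I = 0 := by ring
  rw [e2, e3, Complex.exp_zero, one_mul] at h1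
  rw [h1, hconj]



lemma dense_rot (h : ℂ → ℝ) (hc : Continuous h) (β : ℕ → ℝ)
    (hβrot : ∀ j w, h (Complex.exp ((β j :ℂ) * Complex.I) * w) = h w)
    (hβne : ∀ j, β j ≠ 0)
    (hβ0 : Tendsto β atTop (nhds 0))
    (θ : ℝ) (w : ℂ) :
    h (Complex.exp ((θ:ℂ) * Complex.I) * w) = h w := by
  have hiter : ∀ j (n : ℤ) w,
      h (Complex.exp (Complex.ofReal ((n : ℝ) * β j) * Complex.I) * w) = h w := by
    intro j n
    induction n using Int.induction_on with
    | zero => intro w; norm_num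
    | succ n ih =>
      intro w
      have e : Complex.ofReal (((n+1 : ℤ) : ℝ) * β j) * Complex.I
          = ((β j :ℂ)) * Complex.I + Complex.ofReal (((n:ℤ) : ℝ) * β j) * Complex.I := by
        push_cast; ring
      rw [e, Complex.exp_add, mul_assoc, hβrot j _]
      exact ih w
    | pred n ih =>
      intro w
      have key := hβrot j (Complex.exp (Complex.ofReal (((-n-1 : ℤ) : ℝ) * β j) * Complex.I) * w)
      rw [← mul_assoc, ← Complex.exp_add] at key
      have e : ((β j :ℂ)) * Complex.I + Complex.ofReal (((-n-1 : ℤ) : ℝ) * β j) * Complex.I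
          = Complex.ofReal ((((-n : ℤ)) : ℝ) * β j) * Complex.I := by push_cast; ring
      rw [e, ih w] at key
      exact key.symm
  have hseq : Tendsto (fun j => ((round (θ / β j) : ℤ) : ℝ) * β j) atTop (nhds θ) := by
    have hb : ∀ j, |((round (θ / β j) : ℤ) : ℝ) * β j - θ| ≤ |β j| := by
      intro j
      have hne := hβne j
      have e : ((round (θ / β j) : ℤ) : ℝ) * β j - θ = -(θ/β j - round (θ/β j)) * β j := by
        field_simp; ring
      rw [e, abs_mul, abs_neg]
      calc |θ/β j - round (θ/β j)| * |β j| ≤ 1 * |β j| := by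
            apply mul_le_mul_of_nonneg_right _ (abs_nonneg _)
            exact le_trans (abs_sub_round _) (by norm_num)
        _ = |β j| := one_mul _
    rw [Metric.tendsto_atTop]
    intro ε hε
    rw [Metric.tendsto_atTop] at hβ0
    obtain ⟨N, hN⟩ := hβ0 ε hε
    refine ⟨N, fun n hn => ?_⟩
    have := hN n hn
    simp only [Real.dist_eq, sub_zero] at this ⊢
    exact lt_of_le_of_lt (hb n) this
  have hmap : Continuous (fun r : ℝ => h (Complex.exp (Complex.ofReal r * Complex.I) * w)) :=
    hc.comp (((Complex.continuous_ofReal.mul continuous_const).cexp).mul continuous_const)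
  have hcont := (hmap.tendsto θ).comp hseq
  have hconst : (fun j => h (Complex.exp
        (Complex.ofReal (((round (θ / β j) : ℤ) : ℝ) * β j) * Complex.I) * w))
      = fun _ => h w := funext fun j => hiter j _ w
  rw [show (fun r : ℝ => h (Complex.exp (Complex.ofReal r * Complex.I) * w)) ∘
      (fun j => ((round (θ / β j) : ℤ) : ℝ) * β j)
      = fun j => h (Complex.exp
        (Complex.ofReal (((round (θ / β j) : ℤ) : ℝ) * β j) * Complex.I) * w) from rfl,
    hconst] at hcont
  exact (tendsto_nhds_unique tendsto_const_nhds hcont).symm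


end Aux

theorem steiner_invariance_characterizes_sdr (h : ℂ → ℝ)
    (hc : Continuous h) (hs : HasCompactSupport h) (h0 : ∀ z, 0 ≤ h z)
    (hS : steiner h = h)
    (α : ℕ → ℝ)
    (hα0 : ∀ j, ((α j : ℝ) : AddCircle (2 * Real.pi)) ≠ 0)
    (hαlim : Filter.Tendsto (fun j => ((α j : ℝ) : AddCircle (2 * Real.pi)))
      Filter.atTop (nhds 0))
    (hinv : ∀ j, steinerDir (α j) h = h) :
    h = sdr2 h := by
  classical
  have hπ : (0:ℝ) < 2 * Real.pi := by positivity
  haveI : Fact ((0:ℝ) < 2 * Real.pi) := ⟨hπ⟩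
  -- reflection across the real axis
  have hconj : ∀ z : ℂ, h ((starRingEnd ℂ) z) = h z := by
    intro z
    conv_lhs => rw [← hS]
    rw [steiner_conj, hS]
  -- reflections in the directions α j
  have hdir : ∀ j (z : ℂ), h (Complex.exp ((α j : ℂ) * Complex.I) * (starRingEnd ℂ) z)
      = h (Complex.exp ((α j : ℂ) * Complex.I) * z) := by
    intro j z
    have h1 : steiner (rot (-(α j)) h) = rot (-(α j)) h := by
      have h2 := congrArg (rot (-(α j))) (hinv j)
      unfold steinerDir at h2
      rwa [rot_rot, neg_add_cancel, rot_zero] at h2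
    have h3 : rot (-(α j)) h ((starRingEnd ℂ) z) = rot (-(α j)) h z := by
      conv_lhs => rw [← h1]
      rw [steiner_conj, h1]
    unfold rot at h3
    simp only [Complex.ofReal_neg, neg_neg] at h3
    exact h3
  -- rotation invariance for angles 2 * α j
  have hrot2 : ∀ j (w : ℂ), h (Complex.exp ((2 * α j : ℂ) * Complex.I) * w) = h w :=
    fun j w => rot_two h (α j) (hdir j) hconj w
  -- lift the angles and pass to the limit
  have hdense : ∀ (θ : ℝ) (w : ℂ), h (Complex.exp ((θ:ℂ) * Complex.I) * w) = h w := by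
    have hβrot : ∀ j w, h (Complex.exp
        (Complex.ofReal (2 * (α j - (round ((2*Real.pi)⁻¹ * α j) : ℤ) * (2*Real.pi))) * Complex.I) * w)
        = h w := by
      intro j w
      have e : Complex.ofReal (2 * (α j - (round ((2*Real.pi)⁻¹ * α j) : ℤ) * (2*Real.pi))) * Complex.I
          = (2 * α j : ℂ) * Complex.I
            + ((-(2 * round ((2*Real.pi)⁻¹ * α j)) : ℤ) : ℂ) * (2 * (Real.pi:ℂ) * Complex.I) := by
        push_cast; ring
      rw [e, Complex.exp_add, Complex.exp_int_mul_two_pi_mul_I, mul_one]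
      exact hrot2 j w
    have hβne : ∀ j, 2 * (α j - (round ((2*Real.pi)⁻¹ * α j) : ℤ) * (2*Real.pi)) ≠ 0 := by
      intro j hj
      apply hα0 j
      have e : α j = (round ((2*Real.pi)⁻¹ * α j) : ℤ) * (2*Real.pi) := by
        simp only [mul_eq_zero] at hj
        rcases hj with h' | h'
        · norm_num at h'
        · linarith [sub_eq_zero.mp h']
      rw [e]
      have e2 : ((((round ((2*Real.pi)⁻¹ * α j) : ℤ) * (2*Real.pi) : ℝ)) : AddCircle (2*Real.pi))
          = (round ((2*Real.pi)⁻¹ * α j) : ℤ) • ((2*Real.pi : ℝ) : AddCircle (2*Real.pi)) := by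
        push_cast [← AddCircle.coe_zsmul]
        norm_num
      rw [e2]
      simp [AddCircle.coe_period]
    have hβ0 : Filter.Tendsto
        (fun j => 2 * (α j - (round ((2*Real.pi)⁻¹ * α j) : ℤ) * (2*Real.pi)))
        Filter.atTop (nhds 0) := by
      have h1 : Filter.Tendsto (fun j => ‖((α j : ℝ) : AddCircle (2 * Real.pi))‖)
          Filter.atTop (nhds 0) := by
        simpa [Function.comp_def] using (continuous_norm.tendsto (0 : AddCircle (2*Real.pi))).comp hαlim
      have h2 : ∀ j, ‖((α j : ℝ) : AddCircle (2 * Real.pi))‖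
          = |α j - (round ((2*Real.pi)⁻¹ * α j) : ℤ) * (2*Real.pi)| :=
        fun j => AddCircle.norm_eq (2*Real.pi)
      have h3 : Filter.Tendsto
          (fun j => |2 * (α j - (round ((2*Real.pi)⁻¹ * α j) : ℤ) * (2*Real.pi))|)
          Filter.atTop (nhds 0) := by
        have e : (fun j => |2 * (α j - (round ((2*Real.pi)⁻¹ * α j) : ℤ) * (2*Real.pi))|)
            = fun j => 2 * ‖((α j : ℝ) : AddCircle (2 * Real.pi))‖ := by
          funext j; rw [h2, abs_mul]; norm_num
        rw [e]
        simpa using h1.const_mul 2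
      exact (tendsto_zero_iff_abs_tendsto_zero _).mpr h3
    exact dense_rot h hc (fun j => 2 * (α j - (round ((2*Real.pi)⁻¹ * α j) : ℤ) * (2*Real.pi))) hβrot hβne hβ0
  exact final h hc hs h0 hS hdense
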